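/- Let τ ≥ 2 and let (V, D, w) be a sink-regular weighted (τ,τ+1)-bipartite digraph. Suppose the family 𝒬 := {Q ⊆ V : |Q| = disc(V) and |Q ∩ U| ≥ 1 + disc(U) for every dicut shore U} is nonempty. Then there exists a matroid M on V (a Mathlib Matroid V with ground set the whole of V) whose bases are exactly the members of 𝒬. -/

import Mathlib

open Finset

variable {V : Type*} [Fintype V] [DecidableEq V]

/-- `U` is the shore of a dicut of the digraph `D`: a nonempty proper vertex
subset with no arc of `D` entering it. -/
def IsDicutShore (D : V → V → Prop) (U : Finset V) : Prop :=
  U.Nonempty ∧ U ≠ Finset.univ ∧ ∀ v ∉ U, ∀ u ∈ U, ¬ D v u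

/-- The weight of the dicut `δ⁺(U)` with respect to the weights `w`. -/
def cutWeight (w : V → V → ℕ) (U : Finset V) : ℕ :=
  ∑ u ∈ U, ∑ v ∈ Uᶜ, w u v

/-- The weighted degree of a vertex. -/
def wdeg (w : V → V → ℕ) (v : V) : ℕ := ∑ u, (w u v + w v u)

/-- The set of active vertices: those of weighted degree `τ+1`. -/
def activeFinset (w : V → V → ℕ) (τ : ℕ) : Finset V :=
  Finset.univ.filter fun v => wdeg w v = τ + 1

/-- The discrepancy of a vertex subset `U`: the number of sinks in `U` minus
the number of sources in `U`. -/
def disc (D : V → V → Prop) [DecidableRel D] (U : Finset V) : ℤ :=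
  ((U.filter fun v => ∀ u, ¬ D v u).card : ℤ) -
    ((U.filter fun v => ∀ u, ¬ D u v).card : ℤ)

/-- `(V, D, w)` is a sink-regular weighted `(τ,τ+1)`-bipartite digraph: `D` is
irreflexive, `w` is supported on arcs of `D`, every vertex is a source or a sink,
every source has weighted degree `τ` or `τ+1`, every sink has weighted degree `τ`,
and every dicut has weight at least `τ`. -/
def SinkRegularBipartite (D : V → V → Prop) (w : V → V → ℕ) (τ : ℕ) : Prop :=
  (∀ v, ¬ D v v) ∧ (∀ u v, ¬ D u v → w u v = 0) ∧
  (∀ v : V, (∀ u, ¬ D u v) ∨ (∀ u, ¬ D v u)) ∧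
  (∀ v : V, (∀ u, ¬ D u v) → (wdeg w v = τ ∨ wdeg w v = τ + 1)) ∧
  (∀ v : V, (∀ u, ¬ D v u) → wdeg w v = τ) ∧
  (∀ U : Finset V, IsDicutShore D U → τ ≤ cutWeight w U)

section Core

variable (D : V → V → Prop) [DecidableRel D]

/-- Goodness of a finset: the finset analogue of membership in `𝒬`. -/
def GoodFinset (B : Finset V) : Prop :=
  (B.card : ℤ) = disc D Finset.univ ∧
    ∀ U : Finset V, IsDicutShore D U → 1 + disc D U ≤ ((B ∩ U).card : ℤ)

lemma disc_modular (X Y : Finset V) :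
    disc D (X ∪ Y) + disc D (X ∩ Y) = disc D X + disc D Y := by
  unfold disc
  have h1 : ∀ p : V → Prop, ∀ _ : DecidablePred p,
      ((X ∪ Y).filter p).card + ((X ∩ Y).filter p).card
        = (X.filter p).card + (Y.filter p).card := by
    intro p hp
    rw [Finset.filter_union, Finset.filter_inter_distrib]
    exact Finset.card_union_add_card_inter _ _
  have := h1 (fun v => ∀ u, ¬ D v u) inferInstance
  have := h1 (fun v => ∀ u, ¬ D u v) inferInstance
  push_cast [← this, ← ‹((X ∪ Y).filter fun v => ∀ u, ¬ D v u).card + _ = _›]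
  ring_nf
  omega

lemma card_inter_modular (B X Y : Finset V) :
    (B ∩ (X ∪ Y)).card + (B ∩ (X ∩ Y)).card = (B ∩ X).card + (B ∩ Y).card := by
  have h1 : B ∩ (X ∪ Y) = (B ∩ X) ∪ (B ∩ Y) := by
    ext a; simp only [Finset.mem_inter, Finset.mem_union]; tauto
  have h2 : B ∩ (X ∩ Y) = (B ∩ X) ∩ (B ∩ Y) := by
    ext a; simp only [Finset.mem_inter]; tauto
  rw [h1, h2]
  exact Finset.card_union_add_card_inter _ _

lemma shore_inter {U U' : Finset V} (hU : IsDicutShore D U) (hU' : IsDicutShore D U')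
    (hne : (U ∩ U').Nonempty) : IsDicutShore D (U ∩ U') := by
  refine ⟨hne, ?_, ?_⟩
  · intro hc
    apply hU.2.1
    apply Finset.eq_univ_of_forall
    intro v
    have : v ∈ U ∩ U' := hc ▸ Finset.mem_univ v
    exact (Finset.mem_inter.1 this).1
  · intro v hv u hu
    rcases Finset.mem_inter.1 hu with ⟨hu1, hu2⟩
    by_cases hvU : v ∈ U
    · have hvU' : v ∉ U' := fun hh => hv (Finset.mem_inter.2 ⟨hvU, hh⟩)
      exact hU'.2.2 v hvU' u hu2
    · exact hU.2.2 v hvU u hu1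

lemma shore_union {U U' : Finset V} (hU : IsDicutShore D U) (hU' : IsDicutShore D U')
    (hne : U ∪ U' ≠ Finset.univ) : IsDicutShore D (U ∪ U') := by
  refine ⟨hU.1.mono Finset.subset_union_left, hne, ?_⟩
  intro v hv u hu
  have hv1 : v ∉ U := fun hh => hv (Finset.mem_union_left _ hh)
  have hv2 : v ∉ U' := fun hh => hv (Finset.mem_union_right _ hh)
  rcases Finset.mem_union.1 hu with hu | hu
  · exact hU.2.2 v hv1 u hu
  · exact hU'.2.2 v hv2 u hu

lemma mem_finset_inf {S : Finset (Finset V)} {v : V} :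
    v ∈ S.inf id ↔ ∀ W ∈ S, v ∈ W := by
  classical
  induction S using Finset.induction_on with
  | empty => simp [Finset.inf_empty, Finset.top_eq_univ]
  | @insert A S hAS ih =>
      simp [Finset.inf_insert, Finset.inf_eq_inter, ih, Finset.mem_inter]

lemma good_exchange {B1 B2 : Finset V} (h1 : GoodFinset D B1) (h2 : GoodFinset D B2)
    {x : V} (hx1 : x ∈ B1) (hx2 : x ∉ B2) :
    ∃ y ∈ B2, y ∉ B1 ∧ GoodFinset D (insert y (B1.erase x)) := by
  classical
  have hcard : B1.card = B2.card := by
    have e1 := h1.1; have e2 := h2.1; exact_mod_cast e1.trans e2.symm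
  -- it suffices to find y covering all x-tight shores
  suffices hy : ∃ y ∈ B2, y ∉ B1 ∧ ∀ U : Finset V, IsDicutShore D U → x ∈ U →
      ((B1 ∩ U).card : ℤ) = 1 + disc D U → y ∈ U by
    obtain ⟨y, hyB2, hyB1, hyT⟩ := hy
    have hyx : y ≠ x := fun h => hyB1 (h ▸ hx1)
    have hyer : y ∉ B1.erase x := fun h => hyB1 (Finset.mem_of_mem_erase h)
    refine ⟨y, hyB2, hyB1, ?_, ?_⟩
    · rw [Finset.card_insert_of_notMem hyer, Finset.card_erase_of_mem hx1, ← h1.1]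
      have hpos : 0 < B1.card := Finset.card_pos.2 ⟨x, hx1⟩
      push_cast
      omega
    · intro U hU
      by_cases hxU : x ∈ U
      · by_cases htight : ((B1 ∩ U).card : ℤ) = 1 + disc D U
        · have hyU := hyT U hU hxU htight
          have heq : (insert y (B1.erase x)) ∩ U = insert y ((B1 ∩ U).erase x) := by
            ext a
            simp only [Finset.mem_inter, Finset.mem_insert, Finset.mem_erase]
            constructor
            · rintro ⟨ha | ⟨hax, haB⟩, haU⟩
              · exact Or.inl ha
              · exact Or.inr ⟨hax, haB, haU⟩
            · rintro (rfl | ⟨hax, haB, haU⟩)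
              · exact ⟨Or.inl rfl, hyU⟩
              · exact ⟨Or.inr ⟨hax, haB⟩, haU⟩
          have hxBU : x ∈ B1 ∩ U := Finset.mem_inter.2 ⟨hx1, hxU⟩
          have hyBU : y ∉ (B1 ∩ U).erase x := by
            intro hcon
            exact hyB1 (Finset.mem_inter.1 (Finset.mem_of_mem_erase hcon)).1
          rw [heq, Finset.card_insert_of_notMem hyBU, Finset.card_erase_of_mem hxBU]
          have hpos : 0 < (B1 ∩ U).card := Finset.card_pos.2 ⟨x, hxBU⟩
          push_cast
          omega
        · have hge : 1 + disc D U ≤ ((B1 ∩ U).card : ℤ) := h1.2 U hU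
          have h2d : 2 + disc D U ≤ ((B1 ∩ U).card : ℤ) := by
            rcases lt_or_eq_of_le hge with hlt | heq
            · omega
            · exact absurd heq.symm htight
          have hsub : (B1 ∩ U).erase x ⊆ (insert y (B1.erase x)) ∩ U := by
            intro a ha
            rcases Finset.mem_erase.1 ha with ⟨hax, haBU⟩
            rcases Finset.mem_inter.1 haBU with ⟨haB, haU⟩
            exact Finset.mem_inter.2 ⟨Finset.mem_insert_of_mem (Finset.mem_erase.2 ⟨hax, haB⟩), haU⟩
          have hc := Finset.card_le_card hsub
          have hxBU : x ∈ B1 ∩ U := Finset.mem_inter.2 ⟨hx1, hxU⟩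
          rw [Finset.card_erase_of_mem hxBU] at hc
          have hpos : 0 < (B1 ∩ U).card := Finset.card_pos.2 ⟨x, hxBU⟩
          have : ((B1 ∩ U).card : ℤ) - 1 ≤ (((insert y (B1.erase x)) ∩ U).card : ℤ) := by
            push_cast
            omega
          omega
      · have hsub : B1 ∩ U ⊆ (insert y (B1.erase x)) ∩ U := by
          intro a ha
          rcases Finset.mem_inter.1 ha with ⟨haB, haU⟩
          have hax : a ≠ x := fun h => hxU (h ▸ haU)
          exact Finset.mem_inter.2 ⟨Finset.mem_insert_of_mem (Finset.mem_erase.2 ⟨hax, haB⟩), haU⟩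
        have hc := Finset.card_le_card hsub
        have := h1.2 U hU
        calc 1 + disc D U ≤ ((B1 ∩ U).card : ℤ) := this
          _ ≤ _ := by exact_mod_cast hc
  -- main argument
  by_cases hF : ∀ U : Finset V, IsDicutShore D U → x ∈ U → ((B1 ∩ U).card : ℤ) ≠ 1 + disc D U
  · -- no tight shore: any y ∈ B2 \ B1 works
    have hne : (B2 \ B1).Nonempty := by
      rw [← Finset.card_pos]
      have e1 := Finset.card_sdiff_add_card_inter B2 B1
      have e2 := Finset.card_sdiff_add_card_inter B1 B2
      have e3 : (B1 ∩ B2).card = (B2 ∩ B1).card := by rw [Finset.inter_comm]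
      have hx : 0 < (B1 \ B2).card := Finset.card_pos.2 ⟨x, Finset.mem_sdiff.2 ⟨hx1, hx2⟩⟩
      omega
    obtain ⟨y, hy⟩ := hne
    rcases Finset.mem_sdiff.1 hy with ⟨hy2, hy1⟩
    exact ⟨y, hy2, hy1, fun U hU hxU ht => absurd ht (hF U hU hxU)⟩
  · push_neg at hF
    obtain ⟨U0, hU0s, hU0x, hU0t⟩ := hF
    set F : Finset (Finset V) := Finset.univ.filter
      (fun U => IsDicutShore D U ∧ x ∈ U ∧ ((B1 ∩ U).card : ℤ) = 1 + disc D U) with hFdef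
    have hmemF : ∀ U : Finset V, U ∈ F ↔
        (IsDicutShore D U ∧ x ∈ U ∧ ((B1 ∩ U).card : ℤ) = 1 + disc D U) := by
      intro U; simp [hFdef]
    have hFne : F.Nonempty := ⟨U0, (hmemF U0).2 ⟨hU0s, hU0x, hU0t⟩⟩
    set M : Finset (Finset V) := F.filter (fun A => ∀ W ∈ F, W ⊆ A → W = A) with hMdef
    have hmemM : ∀ A : Finset V, A ∈ M ↔ (A ∈ F ∧ ∀ W ∈ F, W ⊆ A → W = A) := by
      intro A; simp [hMdef]
    -- (a) every tight shore contains a minimal one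
    have hmin : ∀ U ∈ F, ∃ A ∈ M, A ⊆ U := by
      intro U hU
      obtain ⟨A, hA, hAmin⟩ := Finset.exists_minimal (s := F.filter (· ⊆ U)) ⟨U, by simp [hU]⟩
      rcases Finset.mem_filter.1 hA with ⟨hAF, hAU⟩
      refine ⟨A, (hmemM A).2 ⟨hAF, ?_⟩, hAU⟩
      intro W hW hWA
      by_contra hWne
      exact hWne (le_antisymm hWA (hAmin (Finset.mem_filter.2 ⟨hW, hWA.trans hAU⟩)
        hWA))
    -- (b) distinct minimal tight shores cover V
    have hpair : ∀ A ∈ M, ∀ A' ∈ M, A ≠ A' → A ∪ A' = Finset.univ := by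
      intro A hA A' hA' hAA'
      rcases (hmemM A).1 hA with ⟨hAF, hAmin⟩
      rcases (hmemM A').1 hA' with ⟨hA'F, hA'min⟩
      rcases (hmemF A).1 hAF with ⟨hAs, hAx, hAt⟩
      rcases (hmemF A').1 hA'F with ⟨hA's, hA'x, hA't⟩
      by_contra hball
      have hint : (A ∩ A').Nonempty := ⟨x, Finset.mem_inter.2 ⟨hAx, hA'x⟩⟩
      have hints := shore_inter D hAs hA's hint
      have hus := shore_union D hAs hA's hball
      have hmod := card_inter_modular B1 A A'
      have hdm := disc_modular D A A'
      have hu := h1.2 _ hus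
      have hi := h1.2 _ hints
      have htight : ((B1 ∩ (A ∩ A')).card : ℤ) = 1 + disc D (A ∩ A') := by
        have : ((B1 ∩ (A ∪ A')).card : ℤ) + ((B1 ∩ (A ∩ A')).card : ℤ)
            = ((B1 ∩ A).card : ℤ) + ((B1 ∩ A').card : ℤ) := by exact_mod_cast hmod
        omega
      have hAAF : A ∩ A' ∈ F := (hmemF _).2 ⟨hints, Finset.mem_inter.2 ⟨hAx, hA'x⟩, htight⟩
      have e1 := hAmin _ hAAF Finset.inter_subset_left
      have e2 := hA'min _ hAAF Finset.inter_subset_right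
      exact hAA' (by rw [← e1, e2])
    -- (c) main induction on subfamilies of M
    have key : ∀ S : Finset (Finset V), S ⊆ M →
        x ∈ S.inf id ∧
        ((B1 ∩ S.inf id).card : ℤ) = (S.card : ℤ) + disc D (S.inf id) ∧
        (S.card : ℤ) + disc D (S.inf id) ≤ ((B2 ∩ S.inf id).card : ℤ) := by
      intro S
      induction S using Finset.induction_on with
      | empty =>
          intro _
          rw [Finset.inf_empty, Finset.top_eq_univ]
          refine ⟨Finset.mem_univ x, ?_, ?_⟩
          · rw [Finset.inter_univ]; simpa using h1.1
          · rw [Finset.inter_univ]; simp [h2.1]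
      | @insert A S hAS ih =>
          intro hsub
          obtain ⟨hxT, hc1, hc2⟩ := ih (fun a ha => hsub (Finset.mem_insert_of_mem ha))
          have hAM : A ∈ M := hsub (Finset.mem_insert_self _ _)
          rcases (hmemM A).1 hAM with ⟨hAF, _⟩
          rcases (hmemF A).1 hAF with ⟨hAs, hAx, hAt⟩
          set T := S.inf id with hTdef
          have hTA : A ∪ T = Finset.univ := by
            apply Finset.eq_univ_of_forall
            intro v
            by_cases hvA : v ∈ A
            · exact Finset.mem_union_left _ hvA
            · refine Finset.mem_union_right _ (mem_finset_inf.2 ?_)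
              intro W hW
              have hWA : W ≠ A := fun h => hAS (h ▸ hW)
              have := hpair W (hsub (Finset.mem_insert_of_mem hW)) A hAM hWA
              have hv : v ∈ W ∪ A := this ▸ Finset.mem_univ v
              rcases Finset.mem_union.1 hv with h | h
              · exact h
              · exact absurd h hvA
          have hinf : (insert A S).inf id = A ∩ T := by
            rw [Finset.inf_insert]; rfl
          have hmod1 := card_inter_modular B1 A T
          have hmod2 := card_inter_modular B2 A T
          have hdm := disc_modular D A T
          rw [hTA] at hmod1 hmod2 hdm
          rw [Finset.inter_univ] at hmod1 hmod2
          have hcardins : (insert A S).card = S.card + 1 := Finset.card_insert_of_notMem hAS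
          have hb1 := h1.1
          have hb2 := h2.1
          have hb2A := h2.2 A hAs
          rw [hinf, hcardins]
          refine ⟨Finset.mem_inter.2 ⟨hAx, hxT⟩, ?_, ?_⟩
          · have : ((B1).card : ℤ) + ((B1 ∩ (A ∩ T)).card : ℤ)
                = ((B1 ∩ A).card : ℤ) + ((B1 ∩ T).card : ℤ) := by exact_mod_cast hmod1
            push_cast
            omega
          · have : ((B2).card : ℤ) + ((B2 ∩ (A ∩ T)).card : ℤ)
                = ((B2 ∩ A).card : ℤ) + ((B2 ∩ T).card : ℤ) := by exact_mod_cast hmod2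
            push_cast
            omega
    -- apply to M itself
    have hMne : M.Nonempty := by
      obtain ⟨U, hU⟩ := hFne
      obtain ⟨A, hA, _⟩ := hmin U hU
      exact ⟨A, hA⟩
    obtain ⟨hxT, hT1, hT2⟩ := key M (le_refl M)
    set T := M.inf id with hTdef
    have hTsub : ∀ U ∈ F, T ⊆ U := by
      intro U hU
      obtain ⟨A, hAM, hAU⟩ := hmin U hU
      exact (Finset.le_iff_subset.mp (Finset.inf_le hAM)).trans hAU
    have hB21 : (B1 ∩ T).card ≤ (B2 ∩ T).card := by
      have : ((B1 ∩ T).card : ℤ) ≤ ((B2 ∩ T).card : ℤ) := by omega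
      exact_mod_cast this
    have hyne : ((B2 ∩ T) \ B1).Nonempty := by
      rw [← Finset.card_pos]
      have hsub2 : B2 ∩ T ∩ B1 ⊆ (B1 ∩ T).erase x := by
        intro a ha
        simp only [Finset.mem_inter] at ha
        refine Finset.mem_erase.2 ⟨?_, Finset.mem_inter.2 ⟨ha.2, ha.1.2⟩⟩
        rintro rfl
        exact hx2 ha.1.1
      have hc2' := Finset.card_le_card hsub2
      have hxBT : x ∈ B1 ∩ T := Finset.mem_inter.2 ⟨hx1, hxT⟩
      rw [Finset.card_erase_of_mem hxBT] at hc2'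
      have e := Finset.card_sdiff_add_card_inter (B2 ∩ T) B1
      have hpos : 0 < (B1 ∩ T).card := Finset.card_pos.2 ⟨x, hxBT⟩
      omega
    obtain ⟨y, hy⟩ := hyne
    rcases Finset.mem_sdiff.1 hy with ⟨hyBT, hyB1⟩
    rcases Finset.mem_inter.1 hyBT with ⟨hyB2, hyT⟩
    refine ⟨y, hyB2, hyB1, ?_⟩
    intro U hU hxU ht
    exact hTsub U ((hmemF U).2 ⟨hU, hxU, ht⟩) hyT

end Core

section Glue

variable (D : V → V → Prop) [DecidableRel D]

lemma good_card_eq {B B' : Finset V} (hB : GoodFinset D B) (hB' : GoodFinset D B') :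
    B.card = B'.card := by
  have := hB.1; have := hB'.1
  exact_mod_cast ‹(B.card : ℤ) = _›.trans ‹(B'.card : ℤ) = _›.symm

/-- Independence augmentation for the independence system generated by `GoodFinset`. -/
lemma good_aug {I J : Set V} (hI : ∃ B : Finset V, GoodFinset D B ∧ I ⊆ ↑B)
    (hJ : ∃ B : Finset V, GoodFinset D B ∧ J ⊆ ↑B) (hIJ : I.ncard < J.ncard) :
    ∃ e ∈ J, e ∉ I ∧ ∃ B : Finset V, GoodFinset D B ∧ insert e I ⊆ ↑B := by
  classical
  obtain ⟨BI, hBI, hIBI⟩ := hI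
  obtain ⟨BJ, hBJ, hJBJ⟩ := hJ
  set If : Finset V := (Set.toFinite I).toFinset with hIfdef
  set Jf : Finset V := (Set.toFinite J).toFinset with hJfdef
  have hIfcoe : (If : Set V) = I := Set.Finite.coe_toFinset _
  have hJfcoe : (Jf : Set V) = J := Set.Finite.coe_toFinset _
  have hmemIf : ∀ a, a ∈ If ↔ a ∈ I := fun a => Set.Finite.mem_toFinset _
  have hmemJf : ∀ a, a ∈ Jf ↔ a ∈ J := fun a => Set.Finite.mem_toFinset _
  have hIfBI : If ⊆ BI := fun a ha => by
    have : a ∈ I := (hmemIf a).1 ha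
    exact_mod_cast hIBI this
  have hJfBJ : Jf ⊆ BJ := fun a ha => by
    have : a ∈ J := (hmemJf a).1 ha
    exact_mod_cast hJBJ this
  have hIcard : I.ncard = If.card := by rw [← hIfcoe, Set.ncard_coe_finset]
  have hJcard : J.ncard = Jf.card := by rw [← hJfcoe, Set.ncard_coe_finset]
  set cand : Finset (Finset V) := Finset.univ.filter (fun B => GoodFinset D B ∧ If ⊆ B)
    with hcanddef
  have hcandne : cand.Nonempty := ⟨BI, by simp [hcanddef, hBI, hIfBI]⟩
  obtain ⟨B, hBc, hBmax⟩ := Finset.exists_max_image cand (fun B => (B ∩ BJ).card) hcandne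
  have hBgood : GoodFinset D B := (Finset.mem_filter.1 hBc).2.1
  have hIfB : If ⊆ B := (Finset.mem_filter.1 hBc).2.2
  by_cases hcase : ∃ e ∈ Jf, e ∉ If ∧ e ∈ B
  · obtain ⟨e, heJ, heI, heB⟩ := hcase
    refine ⟨e, (hmemJf e).1 heJ, fun h => heI ((hmemIf e).2 h), B, hBgood, ?_⟩
    intro a ha
    rcases Set.mem_insert_iff.1 ha with rfl | haI
    · exact_mod_cast heB
    · exact_mod_cast hIfB ((hmemIf a).2 haI)
  · push_neg at hcase
    exfalso
    have hJfB : Jf ∩ B ⊆ If ∩ Jf := by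
      intro a ha
      rcases Finset.mem_inter.1 ha with ⟨haJ, haB⟩
      by_cases haI : a ∈ If
      · exact Finset.mem_inter.2 ⟨haI, haJ⟩
      · exact absurd haB (hcase a haJ haI)
    have hBBJ : B \ BJ ⊆ If \ Jf := by
      intro z hz
      rcases Finset.mem_sdiff.1 hz with ⟨hzB, hzBJ⟩
      have hzJf : z ∉ Jf := fun h => hzBJ (hJfBJ h)
      refine Finset.mem_sdiff.2 ⟨?_, hzJf⟩
      by_contra hzIf
      obtain ⟨y, hyBJ, hyB, hgood'⟩ := good_exchange D hBgood hBJ hzB hzBJ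
      have hIfB' : If ⊆ insert y (B.erase z) := by
        intro a ha
        have haz : a ≠ z := fun h => hzIf (h ▸ ha)
        exact Finset.mem_insert_of_mem (Finset.mem_erase.2 ⟨haz, hIfB ha⟩)
      have hmem' : insert y (B.erase z) ∈ cand := by simp [hcanddef, hgood', hIfB']
      have hlt : (B ∩ BJ).card < ((insert y (B.erase z)) ∩ BJ).card := by
        have heq : (insert y (B.erase z)) ∩ BJ = insert y (B ∩ BJ) := by
          ext a
          simp only [Finset.mem_inter, Finset.mem_insert, Finset.mem_erase]
          constructor
          · rintro ⟨h | ⟨haz, haB⟩, haBJ⟩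
            · exact Or.inl h
            · exact Or.inr ⟨haB, haBJ⟩
          · rintro (rfl | ⟨haB, haBJ⟩)
            · exact ⟨Or.inl rfl, hyBJ⟩
            · refine ⟨Or.inr ⟨fun h => hzBJ (h ▸ haBJ), haB⟩, haBJ⟩
        rw [heq, Finset.card_insert_of_notMem
          (fun h => hyB (Finset.mem_inter.1 h).1)]
        omega
      exact absurd (hBmax _ hmem') (not_le.2 hlt)
    -- counting contradiction
    have hcard : B.card = BJ.card := good_card_eq D hBgood hBJ
    have e1 := Finset.card_sdiff_add_card_inter B BJ
    have e2 := Finset.card_sdiff_add_card_inter BJ B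
    have e3 : (B ∩ BJ).card = (BJ ∩ B).card := by rw [Finset.inter_comm]
    have e4 : (Jf \ B).card ≤ (BJ \ B).card :=
      Finset.card_le_card (fun a ha => Finset.mem_sdiff.2
        ⟨hJfBJ (Finset.mem_sdiff.1 ha).1, (Finset.mem_sdiff.1 ha).2⟩)
    have e5 := Finset.card_sdiff_add_card_inter Jf B
    have e6 : (Jf ∩ B).card ≤ (If ∩ Jf).card := Finset.card_le_card hJfB
    have e7 : (B \ BJ).card ≤ (If \ Jf).card := Finset.card_le_card hBBJ
    have e8 := Finset.card_sdiff_add_card_inter If Jf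
    have e9 : If.card < Jf.card := by rw [← hIcard, ← hJcard]; exact hIJ
    omega

end Glue

section Final

variable (D : V → V → Prop) [DecidableRel D]

lemma good_set_iff (B : Set V) :
    ((B.ncard : ℤ) = disc D Finset.univ ∧
      ∀ U : Finset V, IsDicutShore D U →
        1 + disc D U ≤ (((B ∩ (U : Set V)).ncard : ℤ))) ↔
    ∃ B0 : Finset V, GoodFinset D B0 ∧ B = ↑B0 := by
  classical
  constructor
  · rintro ⟨hc, hU⟩
    refine ⟨(Set.toFinite B).toFinset, ⟨?_, ?_⟩, (Set.Finite.coe_toFinset _).symm⟩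
    · rwa [show ((Set.toFinite B).toFinset.card : ℤ) = (B.ncard : ℤ) by
        rw [← Set.ncard_coe_finset, Set.Finite.coe_toFinset]]
    · intro U hUs
      have := hU U hUs
      rwa [show ((B ∩ (U : Set V)).ncard : ℤ)
          = (((Set.toFinite B).toFinset ∩ U).card : ℤ) by
        rw [← Set.ncard_coe_finset, Finset.coe_inter, Set.Finite.coe_toFinset]] at this
  · rintro ⟨B0, ⟨hc, hU⟩, rfl⟩
    refine ⟨by rwa [Set.ncard_coe_finset], ?_⟩
    intro U hUs
    have := hU U hUs
    rwa [show (((B0 : Set V) ∩ (U : Set V)).ncard : ℤ) = (((B0 ∩ U)).card : ℤ) by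
      rw [← Finset.coe_inter, Set.ncard_coe_finset]]

theorem aux_dijoin_matroid [Nonempty V] (hne : ∃ Q : Set V, (Q.ncard : ℤ) = disc D Finset.univ ∧
      ∀ U : Finset V, IsDicutShore D U →
        1 + disc D U ≤ (((Q ∩ (U : Set V)).ncard : ℤ))) :
    ∃ M : Matroid V, M.E = Set.univ ∧
      ∀ B : Set V, M.IsBase B ↔
        ((B.ncard : ℤ) = disc D Finset.univ ∧
          ∀ U : Finset V, IsDicutShore D U →
            1 + disc D U ≤ (((B ∩ (U : Set V)).ncard : ℤ))) := by
  classical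
  obtain ⟨Q, hQ⟩ := hne
  obtain ⟨Q0, hQ0, rfl⟩ := (good_set_iff D Q).1 hQ
  set Ind : Set V → Prop := fun I => ∃ B : Finset V, GoodFinset D B ∧ I ⊆ ↑B with hInddef
  have hempty : Ind ∅ := ⟨Q0, hQ0, Set.empty_subset _⟩
  have hsubset : ∀ ⦃I J : Set V⦄, Ind J → I ⊆ J → Ind I := by
    rintro I J ⟨B, hB, hJB⟩ hIJ; exact ⟨B, hB, hIJ.trans hJB⟩
  have haug : ∀ ⦃I J : Set V⦄, Ind I → Ind J → I.ncard < J.ncard →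
      ∃ e ∈ J, e ∉ I ∧ Ind (insert e I) := by
    intro I J hI hJ hc
    obtain ⟨e, heJ, heI, hInd⟩ := good_aug D hI hJ hc
    exact ⟨e, heJ, heI, hInd⟩
  have hground : ∀ ⦃I : Set V⦄, Ind I → I ⊆ Set.univ := fun I _ => Set.subset_univ I
  refine ⟨(IndepMatroid.ofFinite Set.finite_univ Ind hempty hsubset haug hground).matroid,
    rfl, ?_⟩
  intro B
  rw [Matroid.isBase_iff_maximal_indep, maximal_subset_iff, good_set_iff D]
  have hindep : ∀ I : Set V,
      (IndepMatroid.ofFinite Set.finite_univ Ind hempty hsubset haug hground).matroid.Indep I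
        ↔ Ind I := by
    intro I
    rw [IndepMatroid.matroid_indep_iff, IndepMatroid.ofFinite_indep]
  constructor
  · rintro ⟨hBi, hBmax⟩
    obtain ⟨B0, hB0, hBB0⟩ := (hindep B).1 hBi
    have hB0i : (IndepMatroid.ofFinite Set.finite_univ Ind hempty hsubset haug
        hground).matroid.Indep ↑B0 := (hindep _).2 ⟨B0, hB0, subset_refl _⟩
    have := hBmax hB0i hBB0
    exact ⟨B0, hB0, this⟩
  · rintro ⟨B0, hB0, rfl⟩
    refine ⟨(hindep _).2 ⟨B0, hB0, subset_refl _⟩, ?_⟩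
    intro I hIi hBI
    obtain ⟨B1, hB1, hIB1⟩ := (hindep I).1 hIi
    have hsub : (B0 : Set V) ⊆ ↑B1 := hBI.trans hIB1
    have hcards : (B1 : Set V).ncard ≤ (B0 : Set V).ncard := by
      rw [Set.ncard_coe_finset, Set.ncard_coe_finset, good_card_eq D hB1 hB0]
    have heq : (B0 : Set V) = ↑B1 := Set.eq_of_subset_of_ncard_le hsub hcards
      (Set.toFinite _)
    apply Set.Subset.antisymm hBI
    rw [heq] at *
    exact hIB1

end Final


/-- If the family `𝒬 = {Q ⊆ V : |Q| = disc(V), |Q ∩ U| ≥ 1 + disc(U) for every dicut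
shore U}` is nonempty, then it is the set of bases of a matroid on `V`. -/
theorem stmt_10 [Nonempty V] (D : V → V → Prop) [DecidableRel D] (w : V → V → ℕ)
    (τ : ℕ) (hτ : 2 ≤ τ) (h : SinkRegularBipartite D w τ)
    (hne : ∃ Q : Set V, (Q.ncard : ℤ) = disc D Finset.univ ∧
      ∀ U : Finset V, IsDicutShore D U →
        1 + disc D U ≤ (((Q ∩ (U : Set V)).ncard : ℤ))) :
    ∃ M : Matroid V, M.E = Set.univ ∧
      ∀ B : Set V, M.IsBase B ↔
        ((B.ncard : ℤ) = disc D Finset.univ ∧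
          ∀ U : Finset V, IsDicutShore D U →
            1 + disc D U ≤ (((B ∩ (U : Set V)).ncard : ℤ))) := by
  exact aux_dijoin_matroid D hne
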